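/- The degenerate Fubini polynomials F_{n,λ}(x) := Σ_{k=0}^n k! {n brace k}_λ x^k have exponential generating function 1/(1 − x(e_λ(t) − 1)) = Σ_{n=0}^∞ F_{n,λ}(x) t^n/n! as formal power series in t. -/

import Mathlib

open PowerSeries

/-- The degenerate falling factorial `(x)_{n,λ}`. -/
def degFall (lam x : ℝ) (n : ℕ) : ℝ := ∏ i ∈ Finset.range n, (x - i * lam)

/-- The ordinary falling factorial `(x)_k`. -/
def fallF (x : ℝ) (k : ℕ) : ℝ := ∏ i ∈ Finset.range k, (x - i)

/-- The degenerate exponential `e_λ(t) = Σ_{m≥0} (1)_{m,λ} t^m/m!`. -/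
noncomputable def degExpP (lam y : ℝ) : PowerSeries ℝ :=
  PowerSeries.mk fun m => degFall lam y m / (Nat.factorial m)

open Finset

lemma degFall_zero (lam y : ℝ) : degFall lam y 0 = 1 := rfl

lemma degFall_succ (lam y : ℝ) (n : ℕ) :
    degFall lam y (n+1) = degFall lam y n * (y - n * lam) :=
  Finset.prod_range_succ _ _

lemma degFall_add (lam y z : ℝ) : ∀ n : ℕ,
    degFall lam (y + z) n =
      ∑ k ∈ range (n+1), (n.choose k : ℝ) * degFall lam y k * degFall lam z (n - k) := by
  intro n
  induction n with
  | zero => simp [degFall_zero]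
  | succ n ih =>
    rw [degFall_succ, ih, Finset.sum_mul]
    have key : ∀ k ∈ range (n+1),
        (n.choose k : ℝ) * degFall lam y k * degFall lam z (n-k) * (y + z - n * lam)
        = (n.choose k : ℝ) * (degFall lam y (k+1) * degFall lam z (n-k))
          + (n.choose k : ℝ) * (degFall lam y k * degFall lam z (n-k+1)) := by
      intro k hk
      have hk' : k ≤ n := Nat.lt_succ_iff.mp (mem_range.mp hk)
      have hsub : ((n - k : ℕ) : ℝ) = (n : ℝ) - k := by
        rw [Nat.cast_sub hk']
      rw [degFall_succ, degFall_succ]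
      have hyz : y + z - n * lam = (y - k * lam) + (z - ((n - k : ℕ) : ℝ) * lam) := by
        rw [hsub]; ring
      rw [hyz]; ring
    rw [Finset.sum_congr rfl key, Finset.sum_add_distrib]
    -- rearrange the RHS sum over range (n+2)
    have hrhs : ∑ k ∈ range (n+2), ((n+1).choose k : ℝ) * degFall lam y k * degFall lam z (n+1-k)
        = (∑ i ∈ range (n+1),
            (((n+1).choose (i+1) : ℕ) : ℝ) * degFall lam y (i+1) * degFall lam z (n+1-(i+1)))
          + ((n+1).choose 0 : ℝ) * degFall lam y 0 * degFall lam z (n+1-0) :=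
      Finset.sum_range_succ' _ (n+1)
    have pas : ∀ i ∈ range (n+1),
        (((n+1).choose (i+1) : ℕ) : ℝ) * degFall lam y (i+1) * degFall lam z (n+1-(i+1))
        = (n.choose i : ℝ) * (degFall lam y (i+1) * degFall lam z (n-i))
          + (n.choose (i+1) : ℝ) * (degFall lam y (i+1) * degFall lam z (n-i)) := by
      intro i hi
      rw [Nat.choose_succ_succ n i]
      have h2 : n + 1 - (i+1) = n - i := by omega
      rw [h2]
      push_cast
      ring
    rw [hrhs, Finset.sum_congr rfl pas, Finset.sum_add_distrib]
    have h3 : (∑ i ∈ range (n+1), (n.choose (i+1) : ℝ) * (degFall lam y (i+1) * degFall lam z (n-i)))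
        + ((n+1).choose 0 : ℝ) * degFall lam y 0 * degFall lam z (n+1-0)
        = ∑ k ∈ range (n+1), (n.choose k : ℝ) * (degFall lam y k * degFall lam z (n-k+1)) := by
      have e1 : (∑ i ∈ range (n+1), (n.choose (i+1) : ℝ) * (degFall lam y (i+1) * degFall lam z (n-i)))
          = (∑ i ∈ range n, (n.choose (i+1) : ℝ) * (degFall lam y (i+1) * degFall lam z (n-i))) := by
        rw [Finset.sum_range_succ]
        simp [Nat.choose_succ_self]
      have e2 : (∑ k ∈ range (n+1), (n.choose k : ℝ) * (degFall lam y k * degFall lam z (n-k+1)))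
          = (∑ i ∈ range n, (n.choose (i+1) : ℝ) * (degFall lam y (i+1) * degFall lam z (n-(i+1)+1)))
            + (n.choose 0 : ℝ) * (degFall lam y 0 * degFall lam z (n-0+1)) :=
        Finset.sum_range_succ' _ n
      rw [e1, e2]
      congr 1
      · apply Finset.sum_congr rfl
        intro i hi
        have h4 : n - (i+1) + 1 = n - i := by
          have := mem_range.mp hi; omega
        rw [h4]
      · simp [degFall_zero]
    rw [add_assoc, h3]

lemma degExpP_mul (lam y z : ℝ) :
    degExpP lam y * degExpP lam z = degExpP lam (y + z) := by
  ext n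
  rw [PowerSeries.coeff_mul]
  simp only [degExpP, coeff_mk]
  rw [Finset.Nat.sum_antidiagonal_eq_sum_range_succ_mk]
  rw [degFall_add lam y z n, Finset.sum_div]
  apply Finset.sum_congr rfl
  intro k hk
  have hk' : k ≤ n := Nat.lt_succ_iff.mp (mem_range.mp hk)
  have hfac : ((n.factorial : ℝ)) = (n.choose k : ℝ) * k.factorial * (n-k).factorial := by
    rw [← Nat.choose_mul_factorial_mul_factorial hk']
    push_cast; ring
  have h1 : (k.factorial : ℝ) ≠ 0 := Nat.cast_ne_zero.mpr k.factorial_ne_zero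
  have h2 : ((n-k).factorial : ℝ) ≠ 0 := Nat.cast_ne_zero.mpr (n-k).factorial_ne_zero
  have h3 : (n.factorial : ℝ) ≠ 0 := Nat.cast_ne_zero.mpr n.factorial_ne_zero
  field_simp
  rw [hfac]
  ring

lemma degExpP_zero (lam : ℝ) : degExpP lam 0 = 1 := by
  ext n
  simp only [degExpP, coeff_mk, PowerSeries.coeff_one]
  cases n with
  | zero => simp [degFall]
  | succ n =>
    have : degFall lam 0 (n+1) = 0 := by
      apply Finset.prod_eq_zero (Finset.mem_range.mpr (Nat.succ_pos n))
      simp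
    simp [this]

lemma degExpP_pow (lam : ℝ) (j : ℕ) :
    (degExpP lam 1) ^ j = degExpP lam (j : ℝ) := by
  induction j with
  | zero => simp [degExpP_zero]
  | succ j ih =>
    rw [pow_succ, ih, degExpP_mul]
    push_cast
    ring_nf

lemma fallF_nat (j m : ℕ) : fallF (j : ℝ) m = (j.descFactorial m : ℝ) := by
  induction m with
  | zero => simp [fallF]
  | succ m ih =>
    rw [fallF, Finset.prod_range_succ, ← fallF, ih, Nat.descFactorial_succ]
    by_cases h : m ≤ j
    · push_cast [h]
      ring
    · have : j.descFactorial m = 0 := Nat.descFactorial_eq_zero_iff_lt.mpr (by omega)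
      simp [this, Nat.sub_eq_zero_of_le (le_of_not_ge h)]

lemma alt_sum_real (N : ℕ) :
    ∑ i ∈ range (N+1), (-1 : ℝ)^(N-i) * (N.choose i : ℝ) = if N = 0 then 1 else 0 := by
  have base : ∑ i ∈ range (N+1), (-1 : ℝ)^i * (N.choose i : ℝ) = if N = 0 then 1 else 0 := by
    have := Int.alternating_sum_range_choose (n := N)
    have := congrArg (fun t : ℤ => (t : ℝ)) this
    push_cast at this
    simpa using this
  calc ∑ i ∈ range (N+1), (-1 : ℝ)^(N-i) * (N.choose i : ℝ)
      = ∑ i ∈ range (N+1), (-1:ℝ)^N * ((-1 : ℝ)^i * (N.choose i : ℝ)) := by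
        apply Finset.sum_congr rfl
        intro i hi
        have hi' : i ≤ N := Nat.lt_succ_iff.mp (mem_range.mp hi)
        have : (-1:ℝ)^(N-i) * (-1:ℝ)^i = (-1:ℝ)^N := by
          rw [← pow_add]
          congr 1
          omega
        have hsq : ((-1:ℝ)^i) * ((-1:ℝ)^i) = 1 := by
          rw [← pow_add, ← two_mul, pow_mul]; norm_num
        calc (-1 : ℝ)^(N-i) * (N.choose i : ℝ)
            = ((-1:ℝ)^(N-i) * (-1:ℝ)^i) * ((-1:ℝ)^i * (N.choose i : ℝ)) := by
              rw [show ((-1:ℝ)^(N-i) * (-1:ℝ)^i) * ((-1:ℝ)^i * (N.choose i : ℝ))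
                  = (((-1:ℝ)^i) * ((-1:ℝ)^i)) * ((-1:ℝ)^(N-i) * (N.choose i : ℝ)) from by ring,
                hsq, one_mul]
          _ = (-1:ℝ)^N * ((-1 : ℝ)^i * (N.choose i : ℝ)) := by rw [this]
    _ = (-1:ℝ)^N * ∑ i ∈ range (N+1), (-1 : ℝ)^i * (N.choose i : ℝ) := by rw [Finset.mul_sum]
    _ = if N = 0 then 1 else 0 := by
        rw [base]
        by_cases h : N = 0 <;> simp [h]

lemma inversion (k m : ℕ) :
    ∑ j ∈ range (k+1), (-1 : ℝ)^(k-j) * (k.choose j : ℝ) * (j.choose m : ℝ)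
      = if m = k then 1 else 0 := by
  by_cases hmk : m ≤ k
  · -- split off j < m (terms vanish), reindex rest
    have split : range (k+1) = range m ∪ Ico m (k+1) := by
      rw [range_eq_Ico, range_eq_Ico, Finset.Ico_union_Ico_eq_Ico] <;> omega
    rw [split, Finset.sum_union (by
      rw [range_eq_Ico]
      exact Finset.Ico_disjoint_Ico_consecutive 0 m (k+1))]
    have h1 : ∑ j ∈ range m, (-1 : ℝ)^(k-j) * (k.choose j : ℝ) * (j.choose m : ℝ) = 0 := by
      apply Finset.sum_eq_zero
      intro j hj
      have : j.choose m = 0 := Nat.choose_eq_zero_of_lt (mem_range.mp hj)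
      simp [this]
    rw [h1, zero_add]
    rw [Finset.sum_Ico_eq_sum_range]
    have h2 : k + 1 - m = (k - m) + 1 := by omega
    rw [h2]
    have h3 : ∀ i ∈ range ((k-m)+1),
        (-1 : ℝ)^(k-(m+i)) * (k.choose (m+i) : ℝ) * ((m+i).choose m : ℝ)
        = (k.choose m : ℝ) * ((-1:ℝ)^((k-m)-i) * ((k-m).choose i : ℝ)) := by
      intro i hi
      have hi' : i ≤ k - m := Nat.lt_succ_iff.mp (mem_range.mp hi)
      have hle : m + i ≤ k := by omega
      have hch : k.choose (m+i) * (m+i).choose m = k.choose m * (k-m).choose (m+i-m) :=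
        Nat.choose_mul (n := k) (Nat.le_add_right m i)
      have hsub : m + i - m = i := by omega
      rw [hsub] at hch
      have hcast : (k.choose (m+i) : ℝ) * ((m+i).choose m : ℝ)
          = (k.choose m : ℝ) * ((k-m).choose i : ℝ) := by
        exact_mod_cast congrArg (fun t : ℕ => (t : ℝ)) hch
      have hexp : k - (m+i) = (k-m) - i := by omega
      rw [hexp, mul_assoc, hcast]
      ring
    rw [Finset.sum_congr rfl h3, ← Finset.mul_sum, alt_sum_real]
    by_cases h : m = k
    · simp [h]
    · have : k - m ≠ 0 := by omega
      simp [this, h]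
  · have h1 : ∑ j ∈ range (k+1), (-1 : ℝ)^(k-j) * (k.choose j : ℝ) * (j.choose m : ℝ) = 0 := by
      apply Finset.sum_eq_zero
      intro j hj
      have : j.choose m = 0 := Nat.choose_eq_zero_of_lt (by
        have := mem_range.mp hj; omega)
      simp [this]
    rw [h1]
    have : m ≠ k := by omega
    simp [this]

lemma coeff_Ek (lam : ℝ) (S : ℕ → ℕ → ℝ)
    (hS : ∀ (n : ℕ) (z : ℝ),
      degFall lam z n = ∑ k ∈ Finset.range (n + 1), S n k * fallF z k)
    (n k : ℕ) (hk : k ≤ n) :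
    (PowerSeries.coeff n) ((degExpP lam 1 - 1) ^ k)
      = (k.factorial : ℝ) * S n k / (n.factorial : ℝ) := by
  have expand : (degExpP lam 1 - 1 : PowerSeries ℝ) ^ k
      = ∑ j ∈ range (k+1), (degExpP lam 1)^j
          * (PowerSeries.C ((-1:ℝ)^(k-j) * (k.choose j : ℝ))) := by
    rw [sub_eq_add_neg, add_pow]
    apply Finset.sum_congr rfl
    intro j hj
    have e1 : ((-1 : PowerSeries ℝ))^(k-j) = PowerSeries.C ((-1:ℝ)^(k-j)) := by
      rw [map_pow, map_neg, map_one]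
    have e2 : ((k.choose j : ℕ) : PowerSeries ℝ) = PowerSeries.C ((k.choose j : ℕ) : ℝ) :=
      (map_natCast (PowerSeries.C) _).symm
    rw [e1, e2, mul_assoc, ← map_mul]
  rw [expand, map_sum]
  have term : ∀ j ∈ range (k+1),
      (PowerSeries.coeff n) ((degExpP lam 1)^j
          * (PowerSeries.C ((-1:ℝ)^(k-j) * (k.choose j : ℝ))))
      = (∑ m ∈ range (n+1),
          S n m * ((m.factorial : ℝ) * ((-1:ℝ)^(k-j) * (k.choose j : ℝ) * (j.choose m : ℝ))))
        / (n.factorial : ℝ) := by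
    intro j hj
    rw [PowerSeries.coeff_mul_C, degExpP_pow]
    simp only [degExpP, coeff_mk]
    rw [hS n (j : ℝ)]
    rw [div_mul_eq_mul_div, Finset.sum_mul]
    congr 1
    apply Finset.sum_congr rfl
    intro m hm
    rw [fallF_nat j m]
    rw [Nat.descFactorial_eq_factorial_mul_choose]
    push_cast
    ring
  rw [Finset.sum_congr rfl term, ← Finset.sum_div]
  congr 1
  rw [Finset.sum_comm]
  have inner : ∀ m ∈ range (n+1),
      (∑ j ∈ range (k+1),
          S n m * ((m.factorial : ℝ) * ((-1:ℝ)^(k-j) * (k.choose j : ℝ) * (j.choose m : ℝ))))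
      = S n m * (m.factorial : ℝ) * (if m = k then 1 else 0) := by
    intro m hm
    rw [show (∑ j ∈ range (k+1),
          S n m * ((m.factorial : ℝ) * ((-1:ℝ)^(k-j) * (k.choose j : ℝ) * (j.choose m : ℝ))))
        = S n m * (m.factorial : ℝ)
          * ∑ j ∈ range (k+1), (-1:ℝ)^(k-j) * (k.choose j : ℝ) * (j.choose m : ℝ) from by
      rw [Finset.mul_sum]; apply Finset.sum_congr rfl; intro j hj; ring]
    rw [inversion]
  rw [Finset.sum_congr rfl inner]
  rw [Finset.sum_eq_single k]
  · simp [mul_comm]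
  · intro b _ hbk
    simp [hbk]
  · intro h
    exact absurd (mem_range.mpr (Nat.lt_succ_of_le hk)) h

lemma constCoeff_E_sub_one (lam : ℝ) :
    PowerSeries.constantCoeff (degExpP lam 1 - 1) = 0 := by
  rw [map_sub, map_one, ← PowerSeries.coeff_zero_eq_constantCoeff_apply]
  simp [degExpP, degFall]

lemma coeff_u_pow_zero (lam x : ℝ) {n k : ℕ} (h : n < k) :
    (PowerSeries.coeff n) ((PowerSeries.C x * (degExpP lam 1 - 1)) ^ k) = 0 := by
  have hX : (PowerSeries.X : PowerSeries ℝ) ∣ (PowerSeries.C x * (degExpP lam 1 - 1)) :=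
    Dvd.dvd.mul_left (PowerSeries.X_dvd_iff.mpr (constCoeff_E_sub_one lam)) _
  have := pow_dvd_pow_of_dvd hX k
  exact PowerSeries.X_pow_dvd_iff.mp this n h

lemma coeff_Ek_zero (lam : ℝ) {n k : ℕ} (h : n < k) :
    (PowerSeries.coeff n) ((degExpP lam 1 - 1) ^ k) = 0 := by
  have := coeff_u_pow_zero lam 1 (n := n) (k := k) h
  simpa using this

/-- The degenerate Fubini polynomials `F_{n,λ}(x) = Σ_{k=0}^n k! {n brace k}_λ x^k`
have exponential generating function `1/(1 − x(e_λ(t) − 1)) = Σ_n F_{n,λ}(x) t^n/n!`,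
where the degenerate Stirling numbers `S n k = {n brace k}_λ` are defined by
`(x)_{n,λ} = Σ_k S n k (x)_k`. -/
theorem stmt7 (lam x : ℝ) (S : ℕ → ℕ → ℝ)
    (hS : ∀ (n : ℕ) (z : ℝ),
      degFall lam z n = ∑ k ∈ Finset.range (n + 1), S n k * fallF z k) :
    (1 - PowerSeries.C x * (degExpP lam 1 - 1))⁻¹ =
      PowerSeries.mk fun n =>
        (∑ k ∈ Finset.range (n + 1), (Nat.factorial k : ℝ) * S n k * x ^ k) /
          (Nat.factorial n) := by
  set u : PowerSeries ℝ := PowerSeries.C x * (degExpP lam 1 - 1) with hu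
  set G : PowerSeries ℝ := PowerSeries.mk fun n =>
        (∑ k ∈ Finset.range (n + 1), (Nat.factorial k : ℝ) * S n k * x ^ k) /
          (Nat.factorial n) with hG
  have hconst : PowerSeries.constantCoeff (1 - u) ≠ 0 := by
    have : PowerSeries.constantCoeff u = 0 := by
      rw [hu, map_mul, constCoeff_E_sub_one, mul_zero]
    rw [map_sub, this, map_one, sub_zero]
    exact one_ne_zero
  symm
  rw [PowerSeries.eq_inv_iff_mul_eq_one hconst]
  ext n
  -- coefficients of G agree with truncated geometric series up to degree n
  have hGc : ∀ j : ℕ, j ≤ n →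
      (PowerSeries.coeff j) G = (PowerSeries.coeff j) (∑ k ∈ range (n+1), u ^ k) := by
    intro j hj
    rw [map_sum]
    have hterm : ∀ k : ℕ, (PowerSeries.coeff j) (u ^ k)
        = x ^ k * (PowerSeries.coeff j) ((degExpP lam 1 - 1) ^ k) := by
      intro k
      rw [hu, mul_pow, ← map_pow, PowerSeries.coeff_C_mul]
    have h1 : (PowerSeries.coeff j) G
        = ∑ k ∈ range (j+1), x ^ k * (PowerSeries.coeff j) ((degExpP lam 1 - 1) ^ k) := by
      rw [hG, coeff_mk, Finset.sum_div]
      apply Finset.sum_congr rfl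
      intro k hk
      rw [coeff_Ek lam S hS j k (Nat.lt_succ_iff.mp (mem_range.mp hk))]
      ring
    rw [h1]
    rw [Finset.sum_congr rfl (fun k _ => (hterm k).symm)]
    apply Finset.sum_subset
    · exact Finset.range_subset_range.mpr (by omega)
    · intro k hk hk'
      have : j < k := by
        have := mem_range.mp hk
        simp only [mem_range] at hk'
        omega
      rw [hterm k, coeff_Ek_zero lam this, mul_zero]
  -- replace G by the truncated geometric series in the product coefficient
  have hmul : (PowerSeries.coeff n) (G * (1 - u))
      = (PowerSeries.coeff n) ((∑ k ∈ range (n+1), u ^ k) * (1 - u)) := by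
    rw [PowerSeries.coeff_mul, PowerSeries.coeff_mul]
    apply Finset.sum_congr rfl
    intro p hp
    have hp1 : p.1 ≤ n := by
      have := Finset.HasAntidiagonal.mem_antidiagonal.mp hp
      omega
    rw [hGc p.1 hp1]
  rw [hmul]
  have hgeom : (∑ k ∈ range (n+1), u ^ k) * (1 - u) = 1 - u ^ (n+1) := by
    have := geom_sum_mul u (n+1)
    calc (∑ k ∈ range (n+1), u ^ k) * (1 - u)
        = -((∑ k ∈ range (n+1), u ^ k) * (u - 1)) := by ring
      _ = -(u ^ (n+1) - 1) := by rw [this]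
      _ = 1 - u ^ (n+1) := by ring
  rw [hgeom, map_sub, coeff_u_pow_zero lam x (Nat.lt_succ_self n), sub_zero]
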